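/- arXiv:1109.6184 — 4 statements merged into one kernel-verified Lean document; each statement's English description precedes it below -/
import Mathlib

section
/- Let A and B be unital complex *-algebras, ω : A → ℂ a linear functional, k a positive integer, and e₁,…,e_k ∈ A elements with ω(eₗ* eₘ) = δ_{lm} for all l,m ∈ {1,…,k}. Let α : A → A ⊗ B (algebraic tensor product over ℂ, with its canonical *-algebra structure) be a unital *-algebra homomorphism satisfying (ω ⊗ id_B)(α(a)) = ω(a)·1_B for all a ∈ A, and suppose there are elements U_{ml} ∈ B (m,l = 1,…,k) with α(eₗ) = Σ_{m=1}^k eₘ ⊗ U_{ml}. Then Σ_{p=1}^k (U_{pl})* · U_{pm} = δ_{lm}·1_B for all l,m; that is, the matrix U = (U_{ml}) ∈ M_k(B) is an isometry (U*U = I). -/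
open scoped TensorProduct

/-- The canonical star operation on the algebraic tensor product `A ⊗[ℂ] B` of two complex
`*`-algebras, sending `a ⊗ b` to `star a ⊗ star b`. -/
noncomputable def tensorStar (A B : Type*) [Ring A] [Algebra ℂ A] [StarRing A] [StarModule ℂ A]
    [Ring B] [Algebra ℂ B] [StarRing B] [StarModule ℂ B] :
    TensorProduct ℂ A B →+ TensorProduct ℂ A B :=
  TensorProduct.liftAddHom
    { toFun := fun a =>
        { toFun := fun b => star a ⊗ₜ[ℂ] star b
          map_zero' := by simp
          map_add' := fun b₁ b₂ => by simp [star_add, TensorProduct.tmul_add] }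
      map_zero' := by ext b; simp
      map_add' := fun a₁ a₂ => by ext b; simp [star_add, TensorProduct.add_tmul] }
    (fun c a b => by
      simp only [AddMonoidHom.coe_mk, ZeroHom.coe_mk, star_smul, TensorProduct.smul_tmul,
        TensorProduct.tmul_smul, starRingEnd_apply])

/-- if a unital `*`-homomorphism `α : A → A ⊗ B` preserves the state `ω` and maps
each `e l` to `∑ m, e m ⊗ U m l`, where `e₁, …, e_k` is orthonormal with respect to `ω`, then the
matrix `U` is an isometry: `U* U = 1`. -/
theorem isometry_of_state_preserving_star_hom
    {A B : Type*} [Ring A] [Algebra ℂ A] [StarRing A] [StarModule ℂ A]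
    [Ring B] [Algebra ℂ B] [StarRing B] [StarModule ℂ B]
    (ω : A →ₗ[ℂ] ℂ) (k : ℕ) (hk : 0 < k) (e : Fin k → A)
    (he : ∀ l m : Fin k, ω (star (e l) * e m) = if l = m then 1 else 0)
    (α : A →ₐ[ℂ] TensorProduct ℂ A B)
    (hstar : ∀ a : A, α (star a) = tensorStar A B (α a))
    (hω : ∀ a : A,
      ((TensorProduct.lid ℂ B).toLinearMap.comp (LinearMap.rTensor B ω)) (α a) = ω a • (1 : B))
    (U : Fin k → Fin k → B)
    (hU : ∀ l : Fin k, α (e l) = ∑ m : Fin k, e m ⊗ₜ[ℂ] U m l) :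
    ∀ l m : Fin k, ∑ p : Fin k, star (U p l) * U p m = if l = m then (1 : B) else 0 := by
  intro l m
  have h := hω (star (e l) * e m)
  rw [map_mul, hstar, hU, hU, map_sum] at h
  simp only [tensorStar, TensorProduct.liftAddHom_tmul, AddMonoidHom.coe_mk,
    ZeroHom.coe_mk] at h
  rw [Finset.sum_mul_sum] at h
  simp only [Algebra.TensorProduct.tmul_mul_tmul] at h
  simp only [map_sum, LinearMap.comp_apply, LinearMap.rTensor_tmul,
    TensorProduct.lid_tmul, he] at h
  simp only [LinearEquiv.coe_coe, TensorProduct.lid_tmul, ite_smul, one_smul,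
    zero_smul, Finset.sum_ite_eq, Finset.mem_univ, if_true] at h
  exact h
end

section
/- Let H be a complex Hilbert space and (P_n)_{n∈ℕ} a sequence of orthogonal projections on H (self-adjoint idempotent bounded operators) such that P_n ∘ P_m = 0 for n ≠ m and such that for every x ∈ H the family (P_n x)_{n∈ℕ} has sum x. Let T be a bounded operator on H and M ∈ ℕ such that P_n ∘ T ∘ P_m = 0 whenever |n − m| > M. Then for every x in the algebraic linear span of ⋃_{n∈ℕ} range(P_n), the families ((n:ℂ)·P_n(Tx))_n and ((n:ℂ)·P_n x)_n have only finitely many nonzero terms, and ‖ Σ_n (n:ℂ)·P_n(Tx) − T(Σ_n (n:ℂ)·P_n x) ‖ ≤ M(M+1)·‖T‖·‖x‖. In other words, if D denotes the (unbounded) operator Σ_n n·P_n defined on this span, the commutator [D,T] is bounded on the span, with norm at most M(M+1)‖T‖. -/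
open Finset

local notation "⟪" x ", " y "⟫" => @inner ℂ _ _ x y

section AuxCommutatorBound

variable {H : Type*} [NormedAddCommGroup H] [InnerProductSpace ℂ H] [CompleteSpace H]

omit [CompleteSpace H] in
lemma my_pyth {ι : Type*} (s : Finset ι) (v : ι → H)
    (h : ∀ i ∈ s, ∀ j ∈ s, i ≠ j → ⟪v i, v j⟫ = 0) :
    ‖∑ i ∈ s, v i‖ ^ 2 = ∑ i ∈ s, ‖v i‖ ^ 2 := by
  have key : ⟪∑ i ∈ s, v i, ∑ j ∈ s, v j⟫ = ∑ i ∈ s, ⟪v i, v i⟫ := by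
    rw [sum_inner]
    refine Finset.sum_congr rfl fun i hi => ?_
    rw [inner_sum]
    exact Finset.sum_eq_single_of_mem i hi fun j hj hji => h i hi j hj (Ne.symm hji)
  calc ‖∑ i ∈ s, v i‖ ^ 2 = RCLike.re ⟪∑ i ∈ s, v i, ∑ j ∈ s, v j⟫ :=
        (inner_self_eq_norm_sq _).symm
    _ = RCLike.re (∑ i ∈ s, ⟪v i, v i⟫) := by rw [key]
    _ = ∑ i ∈ s, RCLike.re ⟪v i, v i⟫ := map_sum _ _ _
    _ = ∑ i ∈ s, ‖v i‖ ^ 2 := Finset.sum_congr rfl fun i _ => inner_self_eq_norm_sq _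

lemma my_proj_le (P : H →L[ℂ] H) (hsa : IsSelfAdjoint P) (hidem : P ∘L P = P) (y : H) :
    ‖P y‖ ≤ ‖y‖ := by
  have hsym : ∀ u v : H, ⟪P u, v⟫ = ⟪u, P v⟫ := fun u v => hsa.isSymmetric u v
  have hPP : P (P y) = P y := by
    have := congrArg (fun S : H →L[ℂ] H => S y) hidem
    simpa using this
  have h2 : ⟪P y, P y⟫ = ⟪y, P y⟫ := by rw [hsym y (P y), hPP]
  have h5 : ⟪y, P y⟫ = ((‖P y‖ ^ 2 : ℝ) : ℂ) := by
    rw [← h2, inner_self_eq_norm_sq_to_K]; norm_cast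
  have h6 : ‖P y‖ ^ 2 ≤ ‖y‖ * ‖P y‖ := by
    have hle := norm_inner_le_norm (𝕜 := ℂ) y (P y)
    rw [h5] at hle
    simpa [abs_of_nonneg (sq_nonneg (‖P y‖))] using hle
  nlinarith [norm_nonneg (P y), norm_nonneg y]

lemma my_orth_inner (P : ℕ → H →L[ℂ] H) (hsa : ∀ n, IsSelfAdjoint (P n))
    (horth : ∀ n m, n ≠ m → P n ∘L P m = 0) {n m : ℕ} (hnm : n ≠ m) (u v : H) :
    ⟪P n u, P m v⟫ = 0 := by
  have hsym : ∀ u v : H, ⟪P n u, v⟫ = ⟪u, P n v⟫ := fun u v => (hsa n).isSymmetric u v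
  rw [hsym u (P m v)]
  have : P n (P m v) = 0 := by
    have := congrArg (fun S : H →L[ℂ] H => S v) (horth n m hnm)
    simpa using this
  simp [this]

omit [CompleteSpace H] in
lemma my_fin_supp (P : ℕ → H →L[ℂ] H)
    (horth : ∀ n m, n ≠ m → P n ∘L P m = 0) {x : H}
    (hx : x ∈ Submodule.span ℂ (⋃ n : ℕ, Set.range (P n))) :
    {n : ℕ | P n x ≠ 0}.Finite := by
  induction hx using Submodule.span_induction with
  | mem y hy =>
      obtain ⟨_, ⟨n, rfl⟩, z, rfl⟩ := hy
      refine Set.Finite.subset (Set.finite_singleton n) fun m hm => ?_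
      by_contra hmn
      simp only [Set.mem_singleton_iff] at hmn
      have : P m (P n z) = 0 := by
        have := congrArg (fun S : H →L[ℂ] H => S z) (horth m n hmn)
        simpa using this
      exact hm this
  | zero => simp
  | add a b _ _ ha hb =>
      refine Set.Finite.subset (ha.union hb) fun m hm => ?_
      simp only [Set.mem_setOf_eq, map_add] at hm ⊢
      by_contra hc
      simp only [Set.mem_union, Set.mem_setOf_eq, not_or, not_not] at hc
      exact hm (by rw [hc.1, hc.2, add_zero])
  | smul c a _ ha =>
      refine Set.Finite.subset ha fun m hm => ?_
      simp only [Set.mem_setOf_eq, map_smul] at hm ⊢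
      intro h; exact hm (by rw [h, smul_zero])

lemma my_abs_sum_Icc (M : ℕ) : ∑ d ∈ Finset.Icc (-(M : ℤ)) (M : ℤ), |d| = M * (M + 1) := by
  induction M with
  | zero => simp
  | succ k ih =>
      have h1 : Finset.Icc (-((k + 1 : ℕ) : ℤ)) ((k + 1 : ℕ) : ℤ) =
          insert (-((k + 1 : ℕ) : ℤ)) (insert ((k + 1 : ℕ) : ℤ) (Finset.Icc (-(k : ℤ)) (k : ℤ))) := by
        ext d
        simp only [Finset.mem_Icc, Finset.mem_insert]
        push_cast
        omega
      rw [h1, Finset.sum_insert, Finset.sum_insert, ih]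
      · have hp : |((k + 1 : ℕ) : ℤ)| = (k + 1 : ℕ) := abs_of_nonneg (by positivity)
        have hn : |(-((k + 1 : ℕ) : ℤ))| = (k + 1 : ℕ) := by rw [abs_neg]; exact hp
        rw [hn, hp]
        push_cast
        ring
      · simp only [Finset.mem_Icc]
        push_cast
        omega
      · simp only [Finset.mem_insert, Finset.mem_Icc]
        push_cast
        omega

end AuxCommutatorBound

/-- given pairwise orthogonal self-adjoint projections `P n` on a Hilbert space `H`
summing (strongly) to the identity, and a bounded operator `T` which is a band operator of width
`M` with respect to the `P n` (i.e. `P n T P m = 0` for `|n - m| > M`), the commutator of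
`D = ∑ n, n • P n` with `T` is bounded on the algebraic span of the ranges of the `P n`, with
norm at most `M (M + 1) ‖T‖`. -/
theorem commutator_bound_of_band_operator
    {H : Type*} [NormedAddCommGroup H] [InnerProductSpace ℂ H] [CompleteSpace H]
    (P : ℕ → H →L[ℂ] H)
    (hsa : ∀ n, IsSelfAdjoint (P n))
    (hidem : ∀ n, P n ∘L P n = P n)
    (horth : ∀ n m, n ≠ m → P n ∘L P m = 0)
    (hsum : ∀ x : H, HasSum (fun n => P n x) x)
    (T : H →L[ℂ] H) (M : ℕ)
    (hband : ∀ n m : ℕ, (M : ℤ) < |(n : ℤ) - (m : ℤ)| → P n ∘L T ∘L P m = 0)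
    (x : H) (hx : x ∈ Submodule.span ℂ (⋃ n : ℕ, Set.range (P n))) :
    {n : ℕ | (n : ℂ) • P n (T x) ≠ 0}.Finite ∧
    {n : ℕ | (n : ℂ) • P n x ≠ 0}.Finite ∧
    ‖(∑ᶠ n : ℕ, (n : ℂ) • P n (T x)) - T (∑ᶠ n : ℕ, (n : ℂ) • P n x)‖ ≤
      (M : ℝ) * ((M : ℝ) + 1) * ‖T‖ * ‖x‖ := by
  classical
  have hfin0 : {n : ℕ | P n x ≠ 0}.Finite := my_fin_supp P horth hx
  set s : Finset ℕ := hfin0.toFinset with hs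
  set N : ℕ := s.sup id + 1 with hNdef
  have hN : ∀ n : ℕ, P n x ≠ 0 → n < N := by
    intro n hn
    have hns : n ∈ s := by rw [hs]; exact hfin0.mem_toFinset.mpr hn
    exact Nat.lt_succ_of_le (Finset.le_sup (f := id) hns)
  have hPze : ∀ n : ℕ, N ≤ n → P n x = 0 := fun n hn => by
    by_contra h; exact absurd (hN n h) (not_lt.mpr hn)
  have hx_eq : x = ∑ m ∈ Finset.range N, P m x :=
    (hsum x).unique (hasSum_sum_of_ne_finset_zero fun m hm =>
      hPze m (le_of_not_gt fun h => hm (Finset.mem_range.mpr h)))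
  have hband' : ∀ n m : ℕ, (M : ℤ) < |(n : ℤ) - (m : ℤ)| → ∀ y : H, P n (T (P m y)) = 0 := by
    intro n m h y
    have := congrArg (fun S : H →L[ℂ] H => S y) (hband n m h)
    simpa using this
  set K : ℕ := N + M with hKdef
  have hPTx : ∀ n : ℕ, P n (T x) = ∑ m ∈ Finset.range N, P n (T (P m x)) := by
    intro n
    conv_lhs => rw [hx_eq]
    rw [map_sum, map_sum]
  have hTze : ∀ n : ℕ, K ≤ n → P n (T x) = 0 := by
    intro n hn
    rw [hPTx n]
    refine Finset.sum_eq_zero fun m hm => hband' n m ?_ x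
    have hmN : m < N := Finset.mem_range.mp hm
    rw [lt_abs]; omega
  refine ⟨?_, ?_, ?_⟩
  · refine Set.Finite.subset (Set.finite_Iio K) fun n hn => ?_
    simp only [Set.mem_setOf_eq] at hn
    simp only [Set.mem_Iio]
    by_contra h
    exact hn (by rw [hTze n (le_of_not_gt h), smul_zero])
  · refine Set.Finite.subset (Set.finite_Iio N) fun n hn => ?_
    simp only [Set.mem_setOf_eq] at hn
    simp only [Set.mem_Iio]
    by_contra h
    exact hn (by rw [hPze n (le_of_not_gt h), smul_zero])
  -- the norm estimate
  have hA : (∑ᶠ n : ℕ, (n : ℂ) • P n (T x)) = ∑ n ∈ Finset.range K, (n : ℂ) • P n (T x) := by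
    refine finsum_eq_finset_sum_of_support_subset _ fun n hn => ?_
    simp only [Function.mem_support] at hn
    simp only [Finset.coe_range, Set.mem_Iio]
    by_contra h
    exact hn (by rw [hTze n (le_of_not_gt h), smul_zero])
  have hB : (∑ᶠ n : ℕ, (n : ℂ) • P n x) = ∑ n ∈ Finset.range N, (n : ℂ) • P n x := by
    refine finsum_eq_finset_sum_of_support_subset _ fun n hn => ?_
    simp only [Function.mem_support] at hn
    simp only [Finset.coe_range, Set.mem_Iio]
    by_contra h
    exact hn (by rw [hPze n (le_of_not_gt h), smul_zero])
  have hTPm : ∀ m ∈ Finset.range N, T (P m x) = ∑ n ∈ Finset.range K, P n (T (P m x)) := by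
    intro m hm
    have hmN : m < N := Finset.mem_range.mp hm
    refine (hsum (T (P m x))).unique (hasSum_sum_of_ne_finset_zero fun n hn => ?_)
    have hnK : ¬ n < K := fun h => hn (Finset.mem_range.mpr h)
    refine hband' n m ?_ x
    rw [lt_abs]; omega
  set f : ℕ × ℕ → H := fun p => ((p.1 : ℂ) - (p.2 : ℂ)) • P p.1 (T (P p.2 x)) with hf
  set g : ℕ × ℕ → ℤ := fun p => (p.1 : ℤ) - (p.2 : ℤ) with hg
  set A2 : Finset (ℕ × ℕ) := Finset.range K ×ˢ Finset.range N with hA2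
  set t : Finset ℤ := Finset.Icc (-(M : ℤ)) (M : ℤ) with ht
  have hcomm : (∑ᶠ n : ℕ, (n : ℂ) • P n (T x)) - T (∑ᶠ n : ℕ, (n : ℂ) • P n x)
      = ∑ p ∈ A2, f p := by
    rw [hA, hB]
    have e1 : ∑ n ∈ Finset.range K, (n : ℂ) • P n (T x)
        = ∑ p ∈ A2, (p.1 : ℂ) • P p.1 (T (P p.2 x)) := by
      rw [hA2, Finset.sum_product]
      exact Finset.sum_congr rfl fun n _ => by rw [hPTx n, Finset.smul_sum]
    have e2 : T (∑ n ∈ Finset.range N, (n : ℂ) • P n x)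
        = ∑ p ∈ A2, (p.2 : ℂ) • P p.1 (T (P p.2 x)) := by
      rw [map_sum, hA2, Finset.sum_product, Finset.sum_comm]
      refine Finset.sum_congr rfl fun m hm => ?_
      rw [map_smul, hTPm m hm, Finset.smul_sum]
    rw [e1, e2, ← Finset.sum_sub_distrib]
    exact Finset.sum_congr rfl fun p _ => (sub_smul (p.1 : ℂ) (p.2 : ℂ) _).symm
  have hfz : ∀ p ∈ A2, f p ≠ 0 → g p ∈ t := by
    intro p _ hp
    rw [ht, Finset.mem_Icc]
    by_contra hc
    refine hp ?_
    have : (M : ℤ) < |(p.1 : ℤ) - (p.2 : ℤ)| := by rw [lt_abs]; rw [hg] at hc; push_neg at hc; omega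
    rw [hf]
    simp only
    rw [hband' p.1 p.2 this x, smul_zero]
  have hsplit : ∑ p ∈ A2, f p = ∑ d ∈ t, ∑ p ∈ A2 with g p = d, f p := by
    rw [Finset.sum_fiberwise_eq_sum_filter A2 t g f]
    exact (Finset.sum_filter_of_ne hfz).symm
  -- ∑ m < N, ‖P m x‖² = ‖x‖²
  have hxsq : ∑ m ∈ Finset.range N, ‖P m x‖ ^ 2 = ‖x‖ ^ 2 := by
    rw [← my_pyth (Finset.range N) (fun m => P m x)
      (fun i _ j _ hij => my_orth_inner P hsa horth hij x x), ← hx_eq]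
  have hTx_nonneg : (0 : ℝ) ≤ ‖T‖ * ‖x‖ := mul_nonneg (norm_nonneg T) (norm_nonneg x)
  -- per-band bound
  have hband_norm : ∀ d ∈ t, ‖∑ p ∈ A2 with g p = d, f p‖ ≤ |(d : ℝ)| * (‖T‖ * ‖x‖) := by
    intro d _
    have hfp : ∀ p ∈ A2.filter (fun p => g p = d), f p = (d : ℂ) • P p.1 (T (P p.2 x)) := by
      intro p hp
      have hgp : (p.1 : ℤ) - (p.2 : ℤ) = d := (Finset.mem_filter.mp hp).2
      have hC : (p.1 : ℂ) - (p.2 : ℂ) = (d : ℂ) := by exact_mod_cast congrArg (fun z : ℤ => (z : ℂ)) hgp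
      rw [hf]; simp only; rw [hC]
    rw [Finset.sum_congr rfl hfp, ← Finset.smul_sum, norm_smul]
    have hnd : ‖(d : ℂ)‖ = |(d : ℝ)| := by
      have hdc : ((d : ℝ) : ℂ) = (d : ℂ) := by push_cast; ring
      rw [← hdc]
      rw [Complex.norm_real, Real.norm_eq_abs]
    rw [hnd]
    refine mul_le_mul_of_nonneg_left ?_ (abs_nonneg _)
    -- Pythagoras bound for the band sum
    set Fd := A2.filter (fun p => g p = d) with hFd
    have hp1_inj : ∀ p ∈ Fd, ∀ q ∈ Fd, p ≠ q → p.1 ≠ q.1 := by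
      intro p hp q hq hpq h1
      have hgp : (p.1 : ℤ) - (p.2 : ℤ) = d := (Finset.mem_filter.mp hp).2
      have hgq : (q.1 : ℤ) - (q.2 : ℤ) = d := (Finset.mem_filter.mp hq).2
      have : p.2 = q.2 := by omega
      exact hpq (Prod.ext h1 this)
    have hsq : ‖∑ p ∈ Fd, P p.1 (T (P p.2 x))‖ ^ 2 = ∑ p ∈ Fd, ‖P p.1 (T (P p.2 x))‖ ^ 2 :=
      my_pyth Fd _ fun p hp q hq hpq =>
        my_orth_inner P hsa horth (hp1_inj p hp q hq hpq) (T (P p.2 x)) (T (P q.2 x))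
    have hterm : ∀ p ∈ Fd, ‖P p.1 (T (P p.2 x))‖ ^ 2 ≤ ‖T‖ ^ 2 * ‖P p.2 x‖ ^ 2 := by
      intro p _
      have h1 : ‖P p.1 (T (P p.2 x))‖ ≤ ‖T (P p.2 x)‖ := my_proj_le _ (hsa p.1) (hidem p.1) _
      have h2 : ‖T (P p.2 x)‖ ≤ ‖T‖ * ‖P p.2 x‖ := T.le_opNorm _
      nlinarith [norm_nonneg (P p.1 (T (P p.2 x))), norm_nonneg (T (P p.2 x)),
        norm_nonneg (P p.2 x), norm_nonneg T]
    have hsnd_inj : ∀ p ∈ Fd, ∀ q ∈ Fd, p.2 = q.2 → p = q := by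
      intro p hp q hq h2
      have hgp : (p.1 : ℤ) - (p.2 : ℤ) = d := (Finset.mem_filter.mp hp).2
      have hgq : (q.1 : ℤ) - (q.2 : ℤ) = d := (Finset.mem_filter.mp hq).2
      have : p.1 = q.1 := by omega
      exact Prod.ext this h2
    have himg : ∑ p ∈ Fd, ‖P p.2 x‖ ^ 2 ≤ ∑ m ∈ Finset.range N, ‖P m x‖ ^ 2 := by
      have himage := Finset.sum_image (g := Prod.snd) (s := Fd)
        (f := fun m => ‖P m x‖ ^ 2) hsnd_inj
      calc ∑ p ∈ Fd, ‖P p.2 x‖ ^ 2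
          = ∑ m ∈ Fd.image Prod.snd, ‖P m x‖ ^ 2 := himage.symm
        _ ≤ ∑ m ∈ Finset.range N, ‖P m x‖ ^ 2 := by
            refine Finset.sum_le_sum_of_subset_of_nonneg ?_ fun m _ _ => sq_nonneg _
            intro m hm
            obtain ⟨p, hp, rfl⟩ := Finset.mem_image.mp hm
            have hpA2 := (Finset.mem_filter.mp hp).1
            rw [hA2] at hpA2
            exact (Finset.mem_product.mp hpA2).2
    have hfinal : ‖∑ p ∈ Fd, P p.1 (T (P p.2 x))‖ ^ 2 ≤ (‖T‖ * ‖x‖) ^ 2 := by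
      rw [hsq]
      calc ∑ p ∈ Fd, ‖P p.1 (T (P p.2 x))‖ ^ 2
          ≤ ∑ p ∈ Fd, ‖T‖ ^ 2 * ‖P p.2 x‖ ^ 2 := Finset.sum_le_sum hterm
        _ = ‖T‖ ^ 2 * ∑ p ∈ Fd, ‖P p.2 x‖ ^ 2 := by rw [Finset.mul_sum]
        _ ≤ ‖T‖ ^ 2 * ∑ m ∈ Finset.range N, ‖P m x‖ ^ 2 :=
            mul_le_mul_of_nonneg_left himg (sq_nonneg _)
        _ = (‖T‖ * ‖x‖) ^ 2 := by rw [hxsq]; ring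
    nlinarith [norm_nonneg (∑ p ∈ Fd, P p.1 (T (P p.2 x)))]
  -- assemble
  rw [hcomm, hsplit]
  calc ‖∑ d ∈ t, ∑ p ∈ A2 with g p = d, f p‖
      ≤ ∑ d ∈ t, ‖∑ p ∈ A2 with g p = d, f p‖ := norm_sum_le _ _
    _ ≤ ∑ d ∈ t, |(d : ℝ)| * (‖T‖ * ‖x‖) := Finset.sum_le_sum hband_norm
    _ = (∑ d ∈ t, |(d : ℝ)|) * (‖T‖ * ‖x‖) := by rw [Finset.sum_mul]
    _ = ((M : ℝ) * ((M : ℝ) + 1)) * (‖T‖ * ‖x‖) := by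
        have : ∑ d ∈ t, |(d : ℝ)| = (((M : ℤ) * ((M : ℤ) + 1) : ℤ) : ℝ) := by
          rw [← my_abs_sum_Icc M]
          push_cast [Int.cast_abs]
          rfl
        rw [this]; push_cast; ring
    _ = (M : ℝ) * ((M : ℝ) + 1) * ‖T‖ * ‖x‖ := by ring
end

section
/- Let B be a unital complex algebra and let U ∈ M₄(B) be a matrix each of whose rows and columns sums to 1 (i.e. Σ_l U_{kl} = 1 and Σ_l U_{lk} = 1 for every k); this holds in particular for any magic unitary. Let P₂ ∈ M₄(ℂ) be the matrix with entries (P₂)_{kl} = (1/4)·(−1)^{k+l} for k,l ∈ {0,1,2,3}, and let M ∈ M₄(ℂ) be the permutation matrix of the permutation of {0,1,2,3} exchanging 0 ↔ 2 and 1 ↔ 3 (so M_{kl} = 1 if |k − l| = 2 and 0 otherwise). Regarding P₂ and M in M₄(B) via the unital embedding ℂ → B, U commutes with P₂ if and only if U commutes with M. -/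
/-- The projection `P₂` from Example 3.3: `(P₂)ₖₗ = (1/4)·(−1)^(k+l)`. -/
noncomputable def exampleP2 : Matrix (Fin 4) (Fin 4) ℂ :=
  Matrix.of fun k l => (1 / 4 : ℂ) * (-1) ^ ((k : ℕ) + (l : ℕ))

/-- The adjacency matrix of two disjoint segments on `{0,1,2,3}`: `Mₖₗ = 1` iff `|k − l| = 2`. -/
def exampleM : Matrix (Fin 4) (Fin 4) ℂ :=
  Matrix.of fun k l =>
    if (k : ℕ) + 2 = (l : ℕ) ∨ (l : ℕ) + 2 = (k : ℕ) then (1 : ℂ) else 0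

/-- ones matrix -/
def exJ : Matrix (Fin 4) (Fin 4) ℂ := Matrix.of fun _ _ => (1 : ℂ)

lemma keyC : exampleP2 = (1/2 : ℂ) • (1 : Matrix (Fin 4) (Fin 4) ℂ)
    + (1/2 : ℂ) • exampleM - (1/4 : ℂ) • exJ := by
  ext k l
  fin_cases k <;> fin_cases l <;>
    norm_num [exampleP2, exampleM, exJ, Matrix.one_apply]

/-- a `4 × 4` matrix `U` over a unital complex algebra whose rows and columns all sum
to `1` commutes with `P₂` if and only if it commutes with the adjacency matrix `M` of two disjoint
segments. -/
theorem commutes_with_P2_iff_commutes_with_graph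
    {B : Type*} [Ring B] [Algebra ℂ B]
    (U : Matrix (Fin 4) (Fin 4) B)
    (hrow : ∀ k : Fin 4, ∑ l : Fin 4, U k l = 1)
    (hcol : ∀ k : Fin 4, ∑ l : Fin 4, U l k = 1) :
    U * exampleP2.map (algebraMap ℂ B) = exampleP2.map (algebraMap ℂ B) * U ↔
      U * exampleM.map (algebraMap ℂ B) = exampleM.map (algebraMap ℂ B) * U := by
  set φ := algebraMap ℂ B
  have hJ : U * exJ.map φ = exJ.map φ * U := by
    ext k l
    simp [Matrix.mul_apply, exJ, hrow, hcol]
  have hP : exampleP2.map φ = (1/2 : ℂ) • (1 : Matrix (Fin 4) (Fin 4) B)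
      + (1/2 : ℂ) • exampleM.map φ - (1/4 : ℂ) • exJ.map φ := by
    have h := congrArg (AlgHom.mapMatrix (R := ℂ) (Algebra.ofId ℂ B)) keyC
    simp only [map_add, map_sub, map_smul, map_one, AlgHom.mapMatrix_apply] at h
    exact h
  have key : U * exampleP2.map φ - exampleP2.map φ * U
      = (1/2 : ℂ) • (U * exampleM.map φ - exampleM.map φ * U) := by
    rw [hP]
    simp only [Matrix.mul_add, Matrix.add_mul, Matrix.mul_sub, Matrix.sub_mul,
      Matrix.mul_smul, Matrix.smul_mul, Matrix.mul_one, Matrix.one_mul, hJ, smul_sub]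
    abel
  constructor
  · intro h
    have h0 : (1/2 : ℂ) • (U * exampleM.map φ - exampleM.map φ * U) = 0 := by
      rw [← key, h, sub_self]
    have h1 := congrArg (fun X => (2 : ℂ) • X) h0
    simp only [smul_smul, smul_zero] at h1
    norm_num at h1
    exact sub_eq_zero.mp h1
  · intro h
    have h0 : U * exampleP2.map φ - exampleP2.map φ * U = 0 := by
      rw [key, h, sub_self, smul_zero]
    exact sub_eq_zero.mp h0
end

section
/- Let σ be a type with decidable equality and let l₁, l₂ be lists over σ of the same length. Then the run-length patterns of l₁ and l₂ coincide — i.e., splitting each list into maximal runs of consecutive equal elements yields the same list of run lengths — if and only if for every index j with j + 1 < length, the j-th and (j+1)-st entries of l₁ are equal exactly when the j-th and (j+1)-st entries of l₂ are equal. In particular, if two lists of the same length have different run-length patterns, then there exists j such that exactly one of the two lists has equal entries in positions j and j+1. -/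
namespace RunLengthsAux

open List

variable {α : Type*}

theorem loop_eq_append (r : α → α → Bool) (l : List α) (a : α) (g : List α)
    (gs : List (List α)) :
    List.splitBy.loop r l a g gs = gs.reverse ++ List.splitBy.loop r l a g [] := by
  induction l generalizing a g gs with
  | nil => simp [List.splitBy.loop]
  | cons b t ih =>
    simp only [List.splitBy.loop]
    cases r a b with
    | true => rw [ih b (a :: g) gs]
    | false =>
      rw [ih b [] ((a :: g).reverse :: gs), ih b [] [(a :: g).reverse]]
      simp

theorem loop_modifyHead (r : α → α → Bool) (l : List α) (a : α) (g : List α) :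
    List.splitBy.loop r l a g [] =
      (List.splitBy.loop r l a [] []).modifyHead (g.reverse ++ ·) := by
  induction l generalizing a g with
  | nil => simp [List.splitBy.loop]
  | cons b t ih =>
    simp only [List.splitBy.loop]
    cases r a b with
    | true =>
      rw [ih b (a :: g), ih b [a]]
      cases List.splitBy.loop r t b [] [] with
      | nil => simp
      | cons x xs => simp
    | false =>
      rw [loop_eq_append r t b [] [(a :: g).reverse],
        loop_eq_append r t b [] [[a].reverse]]
      simp

theorem splitBy_cons_cons (r : α → α → Bool) (a b : α) (t : List α) :
    List.splitBy r (a :: b :: t) =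
      if r a b then (List.splitBy r (b :: t)).modifyHead (a :: ·)
      else [a] :: List.splitBy r (b :: t) := by
  show List.splitBy.loop r (b :: t) a [] [] = _
  simp only [List.splitBy.loop, List.splitBy]
  cases h : r a b with
  | true => simpa using loop_modifyHead r t b [a]
  | false =>
    simp only [Bool.false_eq_true, if_false]
    rw [loop_eq_append r t b [] [[a].reverse]]
    simp

/-- run lengths -/
def rl [DecidableEq α] (l : List α) : List ℕ :=
  (l.splitBy (· == ·)).map List.length

theorem rl_nil [DecidableEq α] : rl ([] : List α) = [] := rfl

theorem rl_singleton [DecidableEq α] (a : α) : rl [a] = [1] := rfl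

theorem rl_cons_cons [DecidableEq α] (a b : α) (t : List α) :
    rl (a :: b :: t) =
      if a = b then (rl (b :: t)).modifyHead (· + 1) else 1 :: rl (b :: t) := by
  unfold rl
  rw [splitBy_cons_cons]
  by_cases h : a = b
  · rw [if_pos (by simpa using h), if_pos h]
    cases hs : List.splitBy (· == ·) (b :: t) with
    | nil => simp
    | cons x xs => simp [Nat.add_comm]
  · rw [if_neg (by simpa using h), if_neg h]
    simp

theorem rl_length_pos [DecidableEq α] (a : α) (t : List α) :
    ∀ x ∈ rl (a :: t), 0 < x := by
  intro x hx
  unfold rl at hx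
  simp only [List.mem_map] at hx
  obtain ⟨m, hm, rfl⟩ := hx
  have := List.ne_nil_of_mem_splitBy hm
  exact List.length_pos_iff.mpr this

theorem rl_ne_nil [DecidableEq α] (a : α) (t : List α) : rl (a :: t) ≠ [] := by
  unfold rl
  simp only [ne_eq, List.map_eq_nil_iff]
  intro h
  have := List.flatten_splitBy (· == ·) (a :: t)
  rw [h] at this
  simp at this

end RunLengthsAux

/-- two lists of the same length have the same run-length pattern (the list of
lengths of maximal runs of consecutive equal elements) if and only if, for every index `j`, the
entries at positions `j` and `j+1` of the first list are equal exactly when those of the second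
list are. -/
theorem runLengths_eq_iff
    {σ : Type*} [DecidableEq σ] (l₁ l₂ : List σ) (hlen : l₁.length = l₂.length) :
    (l₁.splitBy (· == ·)).map List.length = (l₂.splitBy (· == ·)).map List.length ↔
      ∀ j : ℕ, (hj : j + 1 < l₁.length) →
        (l₁[j]'(by omega) = l₁[j + 1]'hj ↔
          l₂[j]'(by omega) = l₂[j + 1]'(by omega)) := by
  show RunLengthsAux.rl l₁ = RunLengthsAux.rl l₂ ↔ _
  induction l₁ generalizing l₂ with
  | nil =>
    cases l₂ with
    | nil => simp
    | cons c s => simp at hlen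
  | cons a t ih =>
    cases l₂ with
    | cons c s =>
      cases t with
      | nil =>
        cases s with
        | nil => simp [RunLengthsAux.rl_singleton]
        | cons d s' => simp at hlen
      | cons b t' =>
        cases s with
        | nil => simp at hlen
        | cons d s' =>
          have hlen' : (b :: t').length = (d :: s').length := by
            simpa using hlen
          rw [RunLengthsAux.rl_cons_cons, RunLengthsAux.rl_cons_cons]
          have key : RunLengthsAux.rl (a :: b :: t') = RunLengthsAux.rl (c :: d :: s') ↔
              ((a = b ↔ c = d) ∧
                RunLengthsAux.rl (b :: t') = RunLengthsAux.rl (d :: s')) := by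
            rw [RunLengthsAux.rl_cons_cons, RunLengthsAux.rl_cons_cons]
            by_cases hab : a = b <;> by_cases hcd : c = d
            · simp only [if_pos hab, if_pos hcd]
              constructor
              · intro h
                refine ⟨by tauto, ?_⟩
                cases h1 : RunLengthsAux.rl (b :: t') with
                | nil => exact absurd h1 (RunLengthsAux.rl_ne_nil b t')
                | cons x xs =>
                  cases h2 : RunLengthsAux.rl (d :: s') with
                  | nil => exact absurd h2 (RunLengthsAux.rl_ne_nil d s')
                  | cons y ys =>
                    rw [h1, h2] at h
                    simp only [List.modifyHead_cons, List.cons.injEq] at h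
                    have : x = y := by omega
                    simp [this, h.2]
              · rintro ⟨-, h⟩; rw [h]
            · simp only [if_pos hab, if_neg hcd]
              constructor
              · intro h
                exfalso
                cases h1 : RunLengthsAux.rl (b :: t') with
                | nil => exact absurd h1 (RunLengthsAux.rl_ne_nil b t')
                | cons x xs =>
                  have hx : 0 < x :=
                    RunLengthsAux.rl_length_pos b t' x (h1 ▸ List.mem_cons_self)
                  rw [h1] at h
                  simp only [List.modifyHead_cons, List.cons.injEq] at h
                  omega
              · rintro ⟨h, -⟩; tauto
            · simp only [if_neg hab, if_pos hcd]
              constructor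
              · intro h
                exfalso
                cases h2 : RunLengthsAux.rl (d :: s') with
                | nil => exact absurd h2 (RunLengthsAux.rl_ne_nil d s')
                | cons y ys =>
                  have hy : 0 < y :=
                    RunLengthsAux.rl_length_pos d s' y (h2 ▸ List.mem_cons_self)
                  rw [h2] at h
                  simp only [List.modifyHead_cons, List.cons.injEq] at h
                  omega
              · rintro ⟨h, -⟩; tauto
            · simp only [if_neg hab, if_neg hcd]
              constructor
              · intro h
                simp only [List.cons.injEq] at h
                exact ⟨by tauto, h.2⟩
              · rintro ⟨-, h⟩; rw [h]
          rw [← RunLengthsAux.rl_cons_cons, ← RunLengthsAux.rl_cons_cons, key,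
            ih (d :: s') hlen']
          constructor
          · rintro ⟨h0, h⟩ j hj
            cases j with
            | zero => simpa using h0
            | succ k =>
              have hk : k + 1 < (b :: t').length := by
                simp only [List.length_cons] at hj ⊢; omega
              simpa using h k hk
          · intro h
            constructor
            · simpa using h 0 (by simp)
            · intro k hk
              have hk' : k + 1 + 1 < (a :: b :: t').length := by
                simp only [List.length_cons] at hk ⊢; omega
              simpa using h (k + 1) hk'
    | nil => simp at hlen
end
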